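/- Let k ≥ 1 and n ≥ 2k + 3 be integers. The 3-graph S₃(n,k) contains no linear path of length 2k + 1, and its minimum degree satisfies δ₁(S₃(n,k)) = kn − k²/2 − 3k/2. -/
import Mathlib


/-- The degree of a vertex `v` in a hypergraph with edge set `E`:
the number of edges containing `v`. -/
def hdegree {V : Type*} [DecidableEq V] (E : Finset (Finset V)) (v : V) : ℕ :=
  (E.filter (fun e => v ∈ e)).card

/-- The hypergraph with edge set `E` contains a linear path of length `k`:
a collection of `k` (distinct) edges `e₁, …, e_k` such that `|eᵢ ∩ e_j| = 1`
if `|i - j| = 1` and `eᵢ ∩ e_j = ∅` otherwise. -/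
def HasLinearPath {V : Type*} [DecidableEq V] (E : Finset (Finset V)) (k : ℕ) : Prop :=
  ∃ f : Fin k → Finset V, Function.Injective f ∧ (∀ i, f i ∈ E) ∧
    ∀ i j : Fin k, i ≠ j →
      (((i : ℕ) + 1 = j ∨ (j : ℕ) + 1 = i) → (f i ∩ f j).card = 1) ∧
      (¬((i : ℕ) + 1 = j ∨ (j : ℕ) + 1 = i) → f i ∩ f j = ∅)

/-- The edge set of `S₃(n,k)`: vertices are `Fin n`, with `A` the first `k` vertices
and `B` the remaining `n - k` vertices; the edges are all 3-element subsets meeting `A`. -/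
def S3 (n k : ℕ) : Finset (Finset (Fin n)) :=
  Finset.univ.filter (fun e => e.card = 3 ∧ ∃ v ∈ e, (v : ℕ) < k)

open Finset

lemma deg_bij (n k : ℕ) (v : Fin n) :
    hdegree (S3 n k) v =
      (((Finset.univ.erase v).powersetCard 2).filter
        (fun p : Finset (Fin n) => (v : ℕ) < k ∨ ∃ w ∈ p, (w : ℕ) < k)).card := by
  unfold hdegree S3
  rw [Finset.filter_filter]
  refine Finset.card_bij' (fun e _ => e.erase v) (fun p _ => insert v p) ?_ ?_ ?_ ?_
  · intro e he
    simp only [mem_filter, mem_univ, true_and] at he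
    obtain ⟨⟨hc, w, hw, hwk⟩, hv⟩ := he
    simp only [mem_filter, mem_powersetCard]
    refine ⟨⟨fun x hx => ?_, ?_⟩, ?_⟩
    · simp only [mem_erase] at hx ⊢
      exact ⟨hx.1, mem_univ _⟩
    · rw [Finset.card_erase_of_mem hv, hc]
    · by_cases hvk : (v : ℕ) < k
      · exact Or.inl hvk
      · refine Or.inr ⟨w, ?_, hwk⟩
        exact Finset.mem_erase.mpr ⟨fun h => hvk (by rwa [h] at hwk), hw⟩
  · intro p hp
    simp only [mem_filter, mem_powersetCard] at hp
    obtain ⟨⟨hsub, hc⟩, hmeet⟩ := hp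
    have hvp : v ∉ p := fun h => (Finset.mem_erase.mp (hsub h)).1 rfl
    simp only [mem_filter, mem_univ, true_and]
    refine ⟨⟨?_, ?_⟩, Finset.mem_insert_self _ _⟩
    · rw [Finset.card_insert_of_notMem hvp, hc]
    · rcases hmeet with h | ⟨w, hw, hwk⟩
      · exact ⟨v, Finset.mem_insert_self _ _, h⟩
      · exact ⟨w, Finset.mem_insert_of_mem hw, hwk⟩
  · intro e he
    simp only [mem_filter, mem_univ, true_and] at he
    exact Finset.insert_erase he.2
  · intro p hp
    simp only [mem_filter, mem_powersetCard] at hp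
    have hvp : v ∉ p := fun h => (Finset.mem_erase.mp (hp.1.1 h)).1 rfl
    exact Finset.erase_insert hvp

lemma card_A (n k : ℕ) (hkn : k ≤ n) :
    ((Finset.univ : Finset (Fin n)).filter (fun w : Fin n => (w : ℕ) < k)).card = k := by
  rcases Nat.eq_or_lt_of_le hkn with h | h
  · subst h
    rw [Finset.filter_true_of_mem (fun w _ => w.isLt)]
    simp
  · have : ((Finset.univ : Finset (Fin n)).filter (fun w : Fin n => (w : ℕ) < k)) =
        Finset.Iio (⟨k, h⟩ : Fin n) := by
      ext w
      simp [Fin.lt_def]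
    rw [this, Fin.card_Iio]

lemma deg_A (n k : ℕ) (v : Fin n) (hv : (v : ℕ) < k) :
    hdegree (S3 n k) v = (n - 1).choose 2 := by
  rw [deg_bij]
  rw [Finset.filter_true_of_mem (fun p _ => Or.inl hv)]
  rw [Finset.card_powersetCard, Finset.card_erase_of_mem (Finset.mem_univ v),
    Finset.card_univ, Fintype.card_fin]

lemma deg_B (n k : ℕ) (hkn : k < n) (v : Fin n) (hv : ¬ (v : ℕ) < k) :
    hdegree (S3 n k) v = (n - 1).choose 2 - (n - 1 - k).choose 2 := by
  rw [deg_bij]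
  have htot : ((Finset.univ.erase v).powersetCard 2).card = (n-1).choose 2 := by
    rw [Finset.card_powersetCard, Finset.card_erase_of_mem (Finset.mem_univ v),
      Finset.card_univ, Fintype.card_fin]
  have key := Finset.card_filter_add_card_filter_not
    (s := (Finset.univ.erase v).powersetCard 2)
    (p := fun p => (v : ℕ) < k ∨ ∃ w ∈ p, (w : ℕ) < k)
  have hneg : (((Finset.univ.erase v).powersetCard 2).filter
      (fun p : Finset (Fin n) => ¬((v : ℕ) < k ∨ ∃ w ∈ p, (w : ℕ) < k))).card = (n - 1 - k).choose 2 := by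
    have heq : (((Finset.univ.erase v).powersetCard 2).filter
        (fun p : Finset (Fin n) => ¬((v : ℕ) < k ∨ ∃ w ∈ p, (w : ℕ) < k))) =
        ((Finset.univ.erase v).filter (fun w : Fin n => ¬ (w : ℕ) < k)).powersetCard 2 := by
      ext p
      simp only [mem_filter, mem_powersetCard]
      constructor
      · rintro ⟨⟨hsub, hc⟩, hmem⟩
        push_neg at hmem
        exact ⟨fun x hx => Finset.mem_filter.mpr ⟨hsub hx, Nat.not_lt.mpr (hmem.2 x hx)⟩, hc⟩
      · rintro ⟨hsub, hc⟩
        refine ⟨⟨fun x hx => (Finset.mem_filter.mp (hsub hx)).1, hc⟩, ?_⟩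
        push_neg
        exact ⟨Nat.le_of_not_lt hv, fun x hx => Nat.le_of_not_lt (Finset.mem_filter.mp (hsub hx)).2⟩
    rw [heq, Finset.card_powersetCard]
    congr 1
    rw [Finset.filter_erase, Finset.card_erase_of_mem]
    · have := card_A n k hkn.le
      have h2 := Finset.card_filter_add_card_filter_not
        (s := (Finset.univ : Finset (Fin n))) (p := fun w => (w : ℕ) < k)
       
      rw [this, Finset.card_univ, Fintype.card_fin] at h2
      omega
    · exact Finset.mem_filter.mpr ⟨Finset.mem_univ v, hv⟩
  rw [htot] at key
  rw [hneg] at key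
  omega

theorem S3_no_path (k n : ℕ)
    (f : Fin (2 * k + 1) → Finset (Fin n)) (hf : ∀ i, f i ∈ S3 n k)
    (hpath : ∀ i j : Fin (2 * k + 1), i ≠ j →
      (((i : ℕ) + 1 = j ∨ (j : ℕ) + 1 = i) → (f i ∩ f j).card = 1) ∧
      (¬((i : ℕ) + 1 = j ∨ (j : ℕ) + 1 = i) → f i ∩ f j = ∅)) (hkn : k ≤ n) : False := by
  classical
  have hex : ∀ i, ∃ w, w ∈ f i ∧ (w : ℕ) < k := by
    intro i
    have := hf i
    simp only [S3, mem_filter] at this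
    obtain ⟨_, _, w, hw, hwk⟩ := this
    exact ⟨w, hw, hwk⟩
  choose g hg1 hg2 using hex
  set A := (Finset.univ : Finset (Fin n)).filter (fun w : Fin n => (w : ℕ) < k) with hA
  have hmaps : ∀ i : Fin (2 * k + 1), i ∈ (Finset.univ : Finset (Fin (2*k+1))) → g i ∈ A := by
    intro i _
    exact Finset.mem_filter.mpr ⟨Finset.mem_univ _, hg2 i⟩
  have hcard := Finset.card_eq_sum_card_fiberwise hmaps
  have hfiber : ∀ b ∈ A, ((Finset.univ : Finset (Fin (2*k+1))).filter (fun i => g i = b)).card ≤ 2 := by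
    intro b _
    by_contra h
    push_neg at h
    obtain ⟨i, j, l, hi, hj, hl, hij, hil, hjl⟩ := Finset.two_lt_card_iff.mp h
    simp only [Finset.mem_filter] at hi hj hl
    have adj : ∀ x y : Fin (2*k+1), x ≠ y → g x = b → g y = b →
        ((x : ℕ) + 1 = y ∨ (y : ℕ) + 1 = x) := by
      intro x y hxy hx hy
      by_contra hcons
      have := (hpath x y hxy).2 hcons
      have : g x ∈ f x ∩ f y := Finset.mem_inter.mpr ⟨hg1 x, hx ▸ hy ▸ hg1 y⟩
      rw [(hpath x y hxy).2 hcons] at this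
      exact absurd this (Finset.notMem_empty _)
    have h1 := adj i j hij hi.2 hj.2
    have h2 := adj i l hil hi.2 hl.2
    have h3 := adj j l hjl hj.2 hl.2
    have hij' : (i : ℕ) ≠ j := fun h => hij (Fin.ext h)
    have hil' : (i : ℕ) ≠ l := fun h => hil (Fin.ext h)
    have hjl' : (j : ℕ) ≠ l := fun h => hjl (Fin.ext h)
    omega
  have hsum : ∑ b ∈ A, ((Finset.univ : Finset (Fin (2*k+1))).filter (fun i => g i = b)).card ≤ 2 * k := by
    calc ∑ b ∈ A, ((Finset.univ : Finset (Fin (2*k+1))).filter (fun i => g i = b)).card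
        ≤ ∑ _b ∈ A, 2 := Finset.sum_le_sum hfiber
      _ = 2 * k := by rw [Finset.sum_const, card_A n k hkn, smul_eq_mul, mul_comm]
  rw [Finset.card_univ, Fintype.card_fin] at hcard
  omega

theorem S3_free_and_min_degree
    (k n : ℕ) (hk : 1 ≤ k) (hn : 2 * k + 3 ≤ n) :
    ¬ HasLinearPath (S3 n k) (2 * k + 1) ∧
    IsLeast {x : ℚ | ∃ v : Fin n, x = (hdegree (S3 n k) v : ℚ)}
      ((k : ℚ) * n - (k : ℚ) ^ 2 / 2 - 3 * (k : ℚ) / 2) := by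
  have hkn : k < n := by omega
  constructor
  · rintro ⟨f, _, hfE, hpath⟩
    exact S3_no_path k n f hfE hpath hkn.le
  · have hB : (hdegree (S3 n k) (⟨k, hkn⟩ : Fin n) : ℚ) =
        (k : ℚ) * n - (k : ℚ) ^ 2 / 2 - 3 * (k : ℚ) / 2 := by
      rw [deg_B n k hkn ⟨k, hkn⟩ (by simp)]
      have hle : (n - 1 - k).choose 2 ≤ (n - 1).choose 2 :=
        Nat.choose_le_choose 2 (by omega)
      rw [Nat.cast_sub hle, Nat.cast_choose_two, Nat.cast_choose_two]
      have h1 : ((n - 1 : ℕ) : ℚ) = (n : ℚ) - 1 := by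
        rw [Nat.cast_sub (by omega)]; push_cast; ring
      have h2 : ((n - 1 - k : ℕ) : ℚ) = (n : ℚ) - 1 - k := by
        rw [Nat.cast_sub (by omega), Nat.cast_sub (by omega)]; push_cast; ring
      have h3 : ((n - 1 - 1 : ℕ) : ℚ) = (n : ℚ) - 2 := by
        rw [Nat.cast_sub (by omega), Nat.cast_sub (by omega)]; push_cast; ring
      have h4 : ((n - 1 - k - 1 : ℕ) : ℚ) = (n : ℚ) - 1 - k - 1 := by
        rw [Nat.cast_sub (by omega), Nat.cast_sub (by omega), Nat.cast_sub (by omega)]; push_cast; ring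
      rw [h1, h2]
      have h5 : ((n - 1 : ℕ) : ℚ) - 1 = (n : ℚ) - 2 := by rw [h1]; ring
      have h6 : ((n - 1 - k : ℕ) : ℚ) - 1 = (n : ℚ) - 1 - k - 1 := by rw [h2]
      ring
    constructor
    · exact ⟨⟨k, hkn⟩, hB.symm⟩
    · rintro x ⟨v, rfl⟩
      by_cases hv : (v : ℕ) < k
      · rw [deg_A n k v hv, ← hB, deg_B n k hkn ⟨k, hkn⟩ (by simp)]
        exact_mod_cast Nat.cast_le.mpr (Nat.sub_le _ _)
      · rw [deg_B n k hkn v hv, ← hB, deg_B n k hkn ⟨k, hkn⟩ (by simp)]
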